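/- Let D be a 2-strong digraph of order n ≥ 3 and let u, v be two distinct vertices of D. If D contains no directed cycle passing through both u and v, then u and v are non-adjacent, there is no directed path of length two between them (in either direction), and consequently d(u)+d(v) ≤ 2n−4. -/

import Mathlib

variable {V : Type} [Fintype V] [DecidableEq V]

/-- Two distinct vertices are adjacent if there is an arc in at least one direction. -/
def DAdj (A : V → V → Prop) (x y : V) : Prop := A x y ∨ A y x

/-- Out-degree. -/
def outDeg (A : V → V → Prop) [DecidableRel A] (x : V) : ℕ :=
  (Finset.univ.filter fun y => A x y).card

/-- In-degree. -/
def inDeg (A : V → V → Prop) [DecidableRel A] (x : V) : ℕ :=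
  (Finset.univ.filter fun y => A y x).card

/-- Total degree d(x) = d⁺(x) + d⁻(x). -/
def deg (A : V → V → Prop) [DecidableRel A] (x : V) : ℕ :=
  outDeg A x + inDeg A x

/-- d(x, S): number of arcs between x and S, in both directions. -/
def degOn (A : V → V → Prop) [DecidableRel A] (x : V) (S : Finset V) : ℕ :=
  (S.filter fun y => A x y).card + (S.filter fun y => A y x).card

/-- Strong connectivity within a set S: any two vertices of S are joined by a
directed path all of whose vertices lie in S. -/
def StrongOn (A : V → V → Prop) (S : Set V) : Prop :=
  ∀ u ∈ S, ∀ v ∈ S, Relation.ReflTransGen (fun a b => a ∈ S ∧ b ∈ S ∧ A a b) u v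

/-- Strongly connected digraph. -/
def DStrong (A : V → V → Prop) : Prop := StrongOn A Set.univ

/-- 2-strongly connected digraph. -/
def TwoStrong (A : V → V → Prop) : Prop :=
  3 ≤ Fintype.card V ∧ ∀ w : V, StrongOn A {v | v ≠ w}

/-- A directed simple cycle of length m, given as an injective map from `ZMod m`
with consecutive vertices joined by arcs. -/
def IsCycle (A : V → V → Prop) (m : ℕ) (f : ZMod m → V) : Prop :=
  2 ≤ m ∧ Function.Injective f ∧ ∀ i : ZMod m, A (f i) (f (i + 1))

/-- Hamiltonian digraph: a cycle through all vertices. -/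
def Hamiltonian (A : V → V → Prop) : Prop :=
  ∃ f : ZMod (Fintype.card V) → V, IsCycle A (Fintype.card V) f

/-- A Hamiltonian path: a directed path through all vertices. -/
def HamPath (A : V → V → Prop) : Prop :=
  ∃ p : Fin (Fintype.card V) → V, Function.Injective p ∧
    ∀ i : Fin (Fintype.card V), ∀ h : i.val + 1 < Fintype.card V,
      A (p i) (p ⟨i.val + 1, h⟩)

/-- Condition (M): the degree sums over any two distinct pairs of non-adjacent
vertices total at least 4n - 3. -/
def CondM (A : V → V → Prop) [DecidableRel A] : Prop :=
  ∀ x y w z : V, x ≠ y → w ≠ z → ¬ DAdj A x y → ¬ DAdj A w z →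
    ({x, y} : Finset V) ≠ ({w, z} : Finset V) →
    4 * Fintype.card V - 3 ≤ deg A x + deg A y + deg A w + deg A z

section AuxLemmas

variable {V : Type} [Fintype V] [DecidableEq V]

lemma exists_nodup_path {r : V → V → Prop} {a b : V}
    (h : Relation.ReflTransGen r a b) :
    ∃ (l : List V) (hne : l ≠ []), l.Nodup ∧ l.Chain' r ∧
      l.head hne = a ∧ l.getLast hne = b ∧ ∀ x ∈ l, x = a ∨ ∃ y, r y x := by
  induction h using Relation.ReflTransGen.head_induction_on with
  | refl => exact ⟨[b], by simp, by simp, List.isChain_singleton b, rfl, rfl, by simp⟩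
  | @head a c hac hcb ih =>
    obtain ⟨l, hne, hnd, hch, hhd, hlast, hmem⟩ := ih
    by_cases ha : a ∈ l
    · obtain ⟨s, t, rfl⟩ := List.append_of_mem ha
      have hsuf : (a :: t) <:+ s ++ a :: t := ⟨s, rfl⟩
      refine ⟨a :: t, by simp, hnd.sublist hsuf.sublist, hch.suffix hsuf, rfl, ?_, ?_⟩
      · rw [← hlast, List.getLast_append]; simp
      · intro x hx
        rcases hmem x (hsuf.sublist.mem hx) with rfl | hy
        · exact Or.inr ⟨a, hac⟩
        · exact Or.inr hy
    · refine ⟨a :: l, by simp, List.nodup_cons.mpr ⟨ha, hnd⟩, ?_, rfl, ?_, ?_⟩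
      · refine List.isChain_cons.mpr ⟨?_, hch⟩
        intro y hy
        rw [List.head?_eq_head hne] at hy
        obtain rfl : l.head hne = y := by simpa using hy
        rw [hhd]; exact hac
      · rw [List.getLast_cons hne]; exact hlast
      · intro x hx
        rcases List.mem_cons.mp hx with rfl | hx
        · exact Or.inl rfl
        · rcases hmem x hx with rfl | hy
          · exact Or.inr ⟨a, hac⟩
          · exact Or.inr hy

lemma cycle_of_list (A : V → V → Prop) (l : List V) (hne : l ≠ [])
    (hlen : 2 ≤ l.length) (hnd : l.Nodup) (hch : l.Chain' A)
    (hclose : A (l.getLast hne) (l.head hne)) :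
    ∃ m f, IsCycle A m f ∧ ∀ x ∈ l, ∃ i, f i = x := by
  set m := l.length with hm
  haveI : NeZero m := ⟨by omega⟩
  refine ⟨m, fun i => l.get ⟨i.val, ZMod.val_lt i⟩, ⟨hlen, ?_, ?_⟩, ?_⟩
  · intro i j hij
    have h' := (hnd.get_inj_iff).mp hij
    have hv : i.val = j.val := congrArg Fin.val h'
    exact ZMod.val_injective m hv
  · intro i
    have h1 : (1 : ZMod m).val = 1 := by
      haveI : Fact (1 < m) := ⟨by omega⟩
      exact ZMod.val_one m
    have hadd : (i + 1).val = (i.val + 1) % m := by rw [ZMod.val_add, h1]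
    have hvi := ZMod.val_lt i
    by_cases hlt : i.val + 1 < m
    · have hval : (i + 1).val = i.val + 1 := by rw [hadd, Nat.mod_eq_of_lt hlt]
      have hstep := List.isChain_iff_getElem.mp hch i.val (by omega)
      simp only [hval]
      exact hstep
    · have hi : i.val = m - 1 := by omega
      have hz : (i + 1).val = 0 := by
        rw [hadd, hi]
        have h1 : m - 1 + 1 = m := by omega
        rw [h1, Nat.mod_self]
      simp only [hz, hi]
      have hL : l.getLast hne = l.get ⟨m - 1, by omega⟩ := List.getLast_eq_getElem hne
      have hH : l.head hne = l.get ⟨0, by omega⟩ := by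
        rw [List.head_eq_getElem]; simp [List.get_eq_getElem]
      rw [hL, hH] at hclose
      exact hclose
  · intro x hx
    obtain ⟨⟨n, hn⟩, hget⟩ := List.mem_iff_get.mp hx
    refine ⟨(n : ZMod m), ?_⟩
    have : ((n : ZMod m)).val = n := ZMod.val_cast_of_lt hn
    simp only [this]
    exact hget

lemma close_cycle {A : V → V → Prop} {S : Set V} {a b : V} (hab : a ≠ b)
    (hpath : Relation.ReflTransGen (fun x y => x ∈ S ∧ y ∈ S ∧ A x y) a b)
    (hba : A b a) :
    ∃ m f, IsCycle A m f ∧ (∃ i, f i = a) ∧ (∃ j, f j = b) := by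
  obtain ⟨l, hne, hnd, hch, hhd, hlast, -⟩ := exists_nodup_path hpath
  have hchA : l.Chain' A := hch.imp fun _ _ h => h.2.2
  have hlen : 2 ≤ l.length := by
    rcases l with _ | ⟨x, _ | ⟨y, t⟩⟩
    · exact absurd rfl hne
    · exact absurd (hhd.symm.trans hlast) hab
    · simp
  obtain ⟨m, f, hc, hcov⟩ := cycle_of_list A l hne hlen hnd hchA
    (by rw [hhd, hlast]; exact hba)
  exact ⟨m, f, hc, hcov a (hhd ▸ List.head_mem hne), hcov b (hlast ▸ List.getLast_mem hne)⟩

lemma close_cycle2 {A : V → V → Prop} {z a b : V} (hab : a ≠ b)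
    (hza : z ≠ a) (hzb : z ≠ b)
    (hpath : Relation.ReflTransGen
      (fun x y => x ∈ {v : V | v ≠ z} ∧ y ∈ {v : V | v ≠ z} ∧ A x y) a b)
    (hzha : A z a) (hbz : A b z) :
    ∃ m f, IsCycle A m f ∧ (∃ i, f i = a) ∧ (∃ j, f j = b) := by
  obtain ⟨l, hne, hnd, hch, hhd, hlast, hmem⟩ := exists_nodup_path hpath
  have hchA : l.Chain' A := hch.imp fun _ _ h => h.2.2
  have hzl : z ∉ l := by
    intro hz
    rcases hmem z hz with h | ⟨y, hy⟩
    · exact hza h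
    · exact hy.2.1 rfl
  have hne2 : (z :: l) ≠ [] := by simp
  have hlen : 2 ≤ (z :: l).length := by
    rcases l with _ | ⟨x, t⟩
    · exact absurd rfl hne
    · simp
  have hch2 : (z :: l).Chain' A := by
    refine List.isChain_cons.mpr ⟨?_, hchA⟩
    intro y hy
    rw [List.head?_eq_head hne] at hy
    obtain rfl : l.head hne = y := by simpa using hy
    rw [hhd]; exact hzha
  have hclose : A ((z :: l).getLast hne2) ((z :: l).head hne2) := by
    rw [List.getLast_cons hne, hlast]
    exact hbz
  obtain ⟨m, f, hc, hcov⟩ := cycle_of_list A (z :: l) hne2 hlen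
    (List.nodup_cons.mpr ⟨hzl, hnd⟩) hch2 hclose
  exact ⟨m, f, hc, hcov a (by right; rw [← hhd]; exact List.head_mem hne),
    hcov b (by right; rw [← hlast]; exact List.getLast_mem hne)⟩

end AuxLemmas

/-- Lemma 3.5: in a 2-strong digraph of order n ≥ 3, if no cycle
passes through both u and v, then u, v are non-adjacent, there is no path of
length two between them in either direction, and d(u)+d(v) ≤ 2n-4. -/
theorem statement_3 (A : V → V → Prop) [DecidableRel A]
    (hloop : ∀ v : V, ¬ A v v)
    (hn : 3 ≤ Fintype.card V)
    (h2 : TwoStrong A)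
    (u v : V) (huv : u ≠ v)
    (hnc : ¬ ∃ (m : ℕ) (f : ZMod m → V), IsCycle A m f ∧
      (∃ i, f i = u) ∧ (∃ j, f j = v)) :
    ¬ DAdj A u v ∧
    (¬ ∃ z : V, (A u z ∧ A z v) ∨ (A v z ∧ A z u)) ∧
    deg A u + deg A v ≤ 2 * Fintype.card V - 4 := by
  -- a vertex different from u and v
  obtain ⟨w, hwu, hwv⟩ : ∃ w : V, w ≠ u ∧ w ≠ v := by
    by_contra hcon
    push_neg at hcon
    have hsub : (Finset.univ : Finset V) ⊆ {u, v} := by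
      intro x _
      simp only [Finset.mem_insert, Finset.mem_singleton]
      by_cases hxu : x = u
      · exact Or.inl hxu
      · exact Or.inr (hcon x hxu)
    have := Finset.card_le_card hsub
    have h2' : ({u, v} : Finset V).card ≤ 2 := Finset.card_insert_le _ _ |>.trans (by simp)
    rw [Finset.card_univ] at this
    omega
  have hadj : ¬ DAdj A u v := by
    rintro (h | h)
    · -- arc u → v; get path v → u avoiding w, close with u → v
      have hpath := (h2.2 w) v (Ne.symm hwv) u (Ne.symm hwu)
      obtain ⟨m, f, hc, hiv, hiu⟩ := close_cycle huv.symm hpath h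
      exact hnc ⟨m, f, hc, hiu, hiv⟩
    · have hpath := (h2.2 w) u (Ne.symm hwu) v (Ne.symm hwv)
      obtain ⟨m, f, hc, hiu, hiv⟩ := close_cycle huv hpath h
      exact hnc ⟨m, f, hc, hiu, hiv⟩
  have hpath2 : ¬ ∃ z : V, (A u z ∧ A z v) ∨ (A v z ∧ A z u) := by
    rintro ⟨z, ⟨huz, hzv⟩ | ⟨hvz, hzu⟩⟩
    · have hzu' : z ≠ u := fun h => hloop u (h ▸ huz)
      have hzv' : z ≠ v := fun h => hloop v (h ▸ hzv)
      have hpath := (h2.2 z) v hzv'.symm u hzu'.symm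
      obtain ⟨m, f, hc, hiv, hiu⟩ := close_cycle2 huv.symm hzv' hzu' hpath hzv huz
      exact hnc ⟨m, f, hc, hiu, hiv⟩
    · have hzv' : z ≠ v := fun h => hloop v (h ▸ hvz)
      have hzu' : z ≠ u := fun h => hloop u (h ▸ hzu)
      have hpath := (h2.2 z) u hzu'.symm v hzv'.symm
      obtain ⟨m, f, hc, hiu, hiv⟩ := close_cycle2 huv hzu' hzv' hpath hzu hvz
      exact hnc ⟨m, f, hc, hiu, hiv⟩
  refine ⟨hadj, hpath2, ?_⟩
  -- degree bound
  have hAuv : ¬ A u v := fun h => hadj (Or.inl h)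
  have hAvu : ¬ A v u := fun h => hadj (Or.inr h)
  set S1 := Finset.univ.filter (fun y => A u y) with hS1
  set S2 := Finset.univ.filter (fun y => A y u) with hS2
  set S3 := Finset.univ.filter (fun y => A v y) with hS3
  set S4 := Finset.univ.filter (fun y => A y v) with hS4
  have hd14 : Disjoint S1 S4 := by
    rw [Finset.disjoint_left]
    intro z hz1 hz4
    simp only [hS1, hS4, Finset.mem_filter] at hz1 hz4
    exact hpath2 ⟨z, Or.inl ⟨hz1.2, hz4.2⟩⟩
  have hd32 : Disjoint S3 S2 := by
    rw [Finset.disjoint_left]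
    intro z hz3 hz2
    simp only [hS3, hS2, Finset.mem_filter] at hz3 hz2
    exact hpath2 ⟨z, Or.inr ⟨hz3.2, hz2.2⟩⟩
  have hsub14 : S1 ∪ S4 ⊆ Finset.univ \ {u, v} := by
    intro z hz
    rw [Finset.mem_union, hS1, hS4] at hz
    simp only [Finset.mem_filter, Finset.mem_univ, true_and] at hz
    simp only [Finset.mem_sdiff, Finset.mem_univ, true_and, Finset.mem_insert,
      Finset.mem_singleton, not_or]
    refine ⟨?_, ?_⟩
    · rintro rfl
      rcases hz with h | h
      exacts [hloop z h, hAuv h]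
    · rintro rfl
      rcases hz with h | h
      exacts [hAuv h, hloop z h]
  have hsub32 : S3 ∪ S2 ⊆ Finset.univ \ {u, v} := by
    intro z hz
    rw [Finset.mem_union, hS3, hS2] at hz
    simp only [Finset.mem_filter, Finset.mem_univ, true_and] at hz
    simp only [Finset.mem_sdiff, Finset.mem_univ, true_and, Finset.mem_insert,
      Finset.mem_singleton, not_or]
    refine ⟨?_, ?_⟩
    · rintro rfl
      rcases hz with h | h
      exacts [hAvu h, hloop z h]
    · rintro rfl
      rcases hz with h | h
      exacts [hloop z h, hAvu h]
  have hcard : (Finset.univ \ ({u, v} : Finset V)).card = Fintype.card V - 2 := by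
    rw [Finset.card_sdiff_of_subset (Finset.subset_univ _), Finset.card_univ]
    congr 1
    rw [Finset.card_insert_of_notMem (by simpa using huv), Finset.card_singleton]
  have h14 : S1.card + S4.card ≤ Fintype.card V - 2 := by
    rw [← Finset.card_union_of_disjoint hd14, ← hcard]
    exact Finset.card_le_card hsub14
  have h32 : S3.card + S2.card ≤ Fintype.card V - 2 := by
    rw [← Finset.card_union_of_disjoint hd32, ← hcard]
    exact Finset.card_le_card hsub32
  have : deg A u + deg A v = (S1.card + S4.card) + (S3.card + S2.card) := by
    simp only [deg, outDeg, inDeg, hS1, hS2, hS3, hS4]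
    ring
  omega
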